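/- Let α be a nonempty finite type and let p*, q₁, q₂, p : α → ℝ be strictly positive probability mass functions with p* the minimizer characterized by λ₁ · KL(p* ‖ q₁) + λ₂ · KL(p* ‖ q₂) ≤ λ₁ · KL(p ‖ q₁) + λ₂ · KL(p ‖ q₂) for all strictly positive probability mass functions p, where λ₁, λ₂ > 0 and λ₁ + λ₂ = 1. Then the minimizer is unique: if p is any strictly positive probability mass function with λ₁ · KL(p ‖ q₁) + λ₂ · KL(p ‖ q₂) = λ₁ · KL(p* ‖ q₁) + λ₂ · KL(p* ‖ q₂), then p x = (q₁ x)^λ₁ · (q₂ x)^λ₂ / Z for all x, where Z = ∑ₓ (q₁ x)^λ₁ · (q₂ x)^λ₂. -/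

import Mathlib

/-- Kullback–Leibler divergence between two pmfs on a finite type. -/
noncomputable def KL {α : Type*} [Fintype α] (p q : α → ℝ) : ℝ :=
  ∑ x, p x * Real.log (p x / q x)

/-- Gibbs' inequality with equality case: if `KL p q ≤ 0` for positive pmfs, then `p = q`. -/
lemma gibbs_eq {α : Type*} [Fintype α] (p q : α → ℝ)
    (hp : ∀ x, 0 < p x) (hq : ∀ x, 0 < q x)
    (hps : ∑ x, p x = 1) (hqs : ∑ x, q x = 1)
    (h : KL p q ≤ 0) : ∀ x, p x = q x := by
  have hterm : ∀ x, p x * ((q x / p x - 1) - Real.log (q x / p x))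
      = (q x - p x) + p x * Real.log (p x / q x) := by
    intro x
    have hpx := (hp x).ne'
    have : Real.log (q x / p x) = - Real.log (p x / q x) := by
      rw [← Real.log_inv, inv_div]
    rw [this]
    field_simp
    ring
  have hsum : ∑ x, p x * ((q x / p x - 1) - Real.log (q x / p x)) = KL p q := by
    simp only [hterm, Finset.sum_add_distrib, Finset.sum_sub_distrib, hps, hqs, KL]
    ring
  have hnn : ∀ x ∈ Finset.univ, 0 ≤ p x * ((q x / p x - 1) - Real.log (q x / p x)) := by
    intro x _
    have h1 : Real.log (q x / p x) ≤ q x / p x - 1 :=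
      Real.log_le_sub_one_of_pos (div_pos (hq x) (hp x))
    have := (hp x).le
    nlinarith
  have hzero : ∀ x ∈ Finset.univ, p x * ((q x / p x - 1) - Real.log (q x / p x)) = 0 := by
    have hle : ∑ x, p x * ((q x / p x - 1) - Real.log (q x / p x)) ≤ 0 := hsum ▸ h
    have hge : 0 ≤ ∑ x, p x * ((q x / p x - 1) - Real.log (q x / p x)) :=
      Finset.sum_nonneg hnn
    exact (Finset.sum_eq_zero_iff_of_nonneg hnn).mp (le_antisymm hle hge)
  intro x
  have hx := hzero x (Finset.mem_univ x)
  have hpx := (hp x).ne'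
  have heq1 : (q x / p x - 1) - Real.log (q x / p x) = 0 := by
    rcases mul_eq_zero.mp hx with h' | h'
    · exact absurd h' hpx
    · exact h'
  by_contra hne
  have hone : q x / p x ≠ 1 := by
    intro h1
    exact hne ((div_eq_one_iff_eq hpx).mp h1).symm
  have := Real.log_lt_sub_one_of_pos (div_pos (hq x) (hp x)) hone
  linarith

theorem weighted_KL_minimizer_unique
    {α : Type*} [Fintype α] [Nonempty α]
    (pstar q₁ q₂ p : α → ℝ)
    (hpstarpos : ∀ x, 0 < pstar x) (hpstarsum : ∑ x, pstar x = 1)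
    (hq₁pos : ∀ x, 0 < q₁ x) (hq₂pos : ∀ x, 0 < q₂ x)
    (hq₁sum : ∑ x, q₁ x = 1) (hq₂sum : ∑ x, q₂ x = 1)
    (hppos : ∀ x, 0 < p x) (hpsum : ∑ x, p x = 1)
    (l₁ l₂ : ℝ) (hl₁ : 0 < l₁) (hl₂ : 0 < l₂) (hl : l₁ + l₂ = 1)
    (hmin : ∀ r : α → ℝ, (∀ x, 0 < r x) → (∑ x, r x = 1) →
      l₁ * KL pstar q₁ + l₂ * KL pstar q₂ ≤ l₁ * KL r q₁ + l₂ * KL r q₂)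
    (heq : l₁ * KL p q₁ + l₂ * KL p q₂ = l₁ * KL pstar q₁ + l₂ * KL pstar q₂) :
    ∀ x, p x = (q₁ x) ^ l₁ * (q₂ x) ^ l₂ / (∑ y, (q₁ y) ^ l₁ * (q₂ y) ^ l₂) := by
  set Z : ℝ := ∑ y, (q₁ y) ^ l₁ * (q₂ y) ^ l₂ with hZ
  have hZpos : 0 < Z := Finset.sum_pos (fun y _ =>
    mul_pos (Real.rpow_pos_of_pos (hq₁pos y) _) (Real.rpow_pos_of_pos (hq₂pos y) _))
    Finset.univ_nonempty
  set g : α → ℝ := fun x => (q₁ x) ^ l₁ * (q₂ x) ^ l₂ / Z with hg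
  have hgpos : ∀ x, 0 < g x := fun x =>
    div_pos (mul_pos (Real.rpow_pos_of_pos (hq₁pos x) _)
      (Real.rpow_pos_of_pos (hq₂pos x) _)) hZpos
  have hgsum : ∑ x, g x = 1 := by
    simp only [hg, ← Finset.sum_div]
    exact div_self hZpos.ne'
  -- key identity
  have ident : ∀ r : α → ℝ, (∀ x, 0 < r x) → (∑ x, r x = 1) →
      KL r g = l₁ * KL r q₁ + l₂ * KL r q₂ + Real.log Z := by
    intro r hr hrs
    have hterm : ∀ x, r x * Real.log (r x / g x)
        = l₁ * (r x * Real.log (r x / q₁ x)) + l₂ * (r x * Real.log (r x / q₂ x))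
          + r x * Real.log Z := by
      intro x
      have hlogg : Real.log (g x) = l₁ * Real.log (q₁ x) + l₂ * Real.log (q₂ x)
          - Real.log Z := by
        rw [hg]
        rw [Real.log_div (mul_pos (Real.rpow_pos_of_pos (hq₁pos x) _)
          (Real.rpow_pos_of_pos (hq₂pos x) _)).ne' hZpos.ne',
          Real.log_mul (Real.rpow_pos_of_pos (hq₁pos x) _).ne'
          (Real.rpow_pos_of_pos (hq₂pos x) _).ne',
          Real.log_rpow (hq₁pos x), Real.log_rpow (hq₂pos x)]
      rw [Real.log_div (hr x).ne' (hgpos x).ne', hlogg,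
        Real.log_div (hr x).ne' (hq₁pos x).ne', Real.log_div (hr x).ne' (hq₂pos x).ne']
      have : l₁ * Real.log (r x) + l₂ * Real.log (r x) = Real.log (r x) := by
        rw [← add_mul, hl, one_mul]
      linear_combination (- r x * Real.log (r x)) * hl
    simp only [KL, hterm, Finset.sum_add_distrib, ← Finset.mul_sum, ← Finset.sum_mul, hrs]
    ring
  -- p achieves value ≤ value of g, and value of g is log Z-free minimum
  have hgKL : KL g g = 0 := by
    have hdiv : ∀ x, g x / g x = 1 := fun x => div_self (hgpos x).ne'
    simp [KL, hdiv]
  have h1 : l₁ * KL pstar q₁ + l₂ * KL pstar q₂ ≤ - Real.log Z := by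
    have := hmin g hgpos hgsum
    have h2 := ident g hgpos hgsum
    rw [hgKL] at h2
    linarith
  have h3 := ident p hppos hpsum
  have h4 : KL p g ≤ 0 := by linarith
  intro x
  exact gibbs_eq p g hppos hgpos hpsum hgsum h4 x
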